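/- Suppose for all bounded continuous functions w and all x, x' ∈ E, a ∈ U: ∫ e^w dP^a(x,·) ≤ K · ∫ e^w dP^a(x',·) with K < ∞. Then for every x, x' ∈ E and a ∈ U, the measure P^a(x,·) is absolutely continuous with respect to P^a(x',·) with Radon–Nikodym density bounded above by K (and by symmetry bounded below by 1/K). -/

import Mathlib

open MeasureTheory BoundedContinuousFunction Metric Filter

private lemma B1_key {E : Type*} [MetricSpace E] [MeasurableSpace E] [BorelSpace E]
    (μ ν : Measure E) [IsProbabilityMeasure μ] [IsProbabilityMeasure ν] (K : ℝ)
    (hK1 : 1 ≤ K)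
    (h : ∀ w : E →ᵇ ℝ, (∫ y, Real.exp (w y) ∂μ) ≤ K * ∫ y, Real.exp (w y) ∂ν) :
    ∀ B : Set E, MeasurableSet B → μ B ≤ ENNReal.ofReal K * ν B := by
  have hK0 : 0 ≤ K := le_trans zero_le_one hK1
  -- Step 1: the inequality for closed sets, via the approximation
  -- `e^{-n min(dist(·,F),1)} → 1_F`.
  have hclosed : ∀ F : Set E, IsClosed F → (μ F).toReal ≤ K * (ν F).toReal := by
    intro F hF
    rcases F.eq_empty_or_nonempty with rfl | hFne
    · simp [mul_nonneg hK0 ENNReal.toReal_nonneg]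
    have hcont : ∀ n : ℕ, Continuous fun y : E => -(n : ℝ) * min (infDist y F) 1 :=
      fun n => continuous_const.mul ((continuous_infDist_pt F).min continuous_const)
    have hbd : ∀ (n : ℕ) (y : E), ‖-(n : ℝ) * min (infDist y F) 1‖ ≤ (n : ℝ) := by
      intro n y
      have h0 : 0 ≤ min (infDist y F) 1 := le_min infDist_nonneg zero_le_one
      have h1 : min (infDist y F) 1 ≤ 1 := min_le_right _ _
      rw [norm_mul, norm_neg, Real.norm_natCast, Real.norm_of_nonneg h0]
      calc (n : ℝ) * min (infDist y F) 1 ≤ (n : ℝ) * 1 := by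
            exact mul_le_mul_of_nonneg_left h1 (Nat.cast_nonneg n)
        _ = n := mul_one _
    set w : ℕ → E →ᵇ ℝ := fun n =>
      BoundedContinuousFunction.ofNormedAddCommGroup _ (hcont n) (n : ℝ) (hbd n) with hw
    have hwval : ∀ (n : ℕ) (y : E), w n y = -(n : ℝ) * min (infDist y F) 1 := by
      intro n y; rfl
    -- pointwise limit
    have hpt : ∀ y : E, Tendsto (fun n : ℕ => Real.exp (w n y)) atTop
        (nhds (F.indicator (1 : E → ℝ) y)) := by
      intro y
      by_cases hy : y ∈ F
      · have : ∀ n : ℕ, Real.exp (w n y) = 1 := by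
          intro n
          rw [hwval, infDist_zero_of_mem hy]
          simp
        simp only [this, Set.indicator_of_mem hy]
        exact tendsto_const_nhds
      · have hd : 0 < min (infDist y F) 1 :=
          lt_min ((hF.notMem_iff_infDist_pos hFne).1 hy) one_pos
        have hexp : ∀ n : ℕ, Real.exp (w n y)
            = (Real.exp (-(min (infDist y F) 1))) ^ n := by
          intro n
          rw [hwval, neg_mul, ← mul_neg, Real.exp_nat_mul]
        rw [Set.indicator_of_notMem hy]
        simp only [hexp]
        exact tendsto_pow_atTop_nhds_zero_of_lt_one (Real.exp_nonneg _)
          (by rw [Real.exp_lt_one_iff]; linarith)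
    have hintlim : ∀ (ρ : Measure E), IsProbabilityMeasure ρ →
        Tendsto (fun n : ℕ => ∫ y, Real.exp (w n y) ∂ρ) atTop (nhds ((ρ F).toReal)) := by
      intro ρ hρ
      have hind : (ρ F).toReal = ∫ y, F.indicator (1 : E → ℝ) y ∂ρ := by
        rw [MeasureTheory.integral_indicator_one hF.measurableSet]; rfl
      rw [hind]
      refine tendsto_integral_of_dominated_convergence (fun _ => (1 : ℝ))
        (fun n => ?_) (integrable_const 1) (fun n => ?_) ?_
      · exact (Real.continuous_exp.comp (w n).continuous).aestronglyMeasurable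
      · filter_upwards with y
        rw [Real.norm_of_nonneg (Real.exp_nonneg _)]
        have : w n y ≤ 0 := by
          rw [hwval]
          exact mul_nonpos_of_nonpos_of_nonneg (neg_nonpos.2 (Nat.cast_nonneg n))
            (le_min infDist_nonneg zero_le_one)
        calc Real.exp (w n y) ≤ Real.exp 0 := Real.exp_le_exp.2 this
          _ = 1 := Real.exp_zero
      · filter_upwards with y using hpt y
    exact le_of_tendsto_of_tendsto' (hintlim μ ‹_›) ((hintlim ν ‹_›).const_mul K)
      (fun n => h (w n))
  -- Step 2: extend to all measurable sets by inner regularity by closed sets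
  intro B hB
  rw [hB.measure_eq_iSup_isClosed_of_ne_top (measure_ne_top μ B)]
  refine iSup_le fun F => iSup_le fun hFB => iSup_le fun hF => ?_
  calc μ F = ENNReal.ofReal (μ F).toReal := (ENNReal.ofReal_toReal (measure_ne_top μ F)).symm
    _ ≤ ENNReal.ofReal (K * (ν F).toReal) := ENNReal.ofReal_le_ofReal (hclosed F hF)
    _ = ENNReal.ofReal K * ENNReal.ofReal (ν F).toReal := ENNReal.ofReal_mul hK0
    _ = ENNReal.ofReal K * ν F := by rw [ENNReal.ofReal_toReal (measure_ne_top ν F)]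
    _ ≤ ENNReal.ofReal K * ν B := by
        exact mul_le_mul_right (measure_mono hFB) _

/-- If `∫ e^w dP^a(x,·) ≤ K ∫ e^w dP^a(x',·)` for all bounded continuous `w`, all
`x, x'` and `a` (condition (B.1)), then each `P^a(x,·)` is absolutely continuous with
respect to `P^a(x',·)` with density bounded above by `K` (equivalently
`P^a(x,B) ≤ K · P^a(x',B)` for all measurable `B`; by symmetry the density is also
bounded below by `1/K`). -/
theorem B1_implies_equivalent_kernels
    {E U : Type*} [TopologicalSpace E] [PolishSpace E]
    [MeasurableSpace E] [BorelSpace E]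
    (P : E → U → Measure E) (hP : ∀ x a, IsProbabilityMeasure (P x a))
    (K : ℝ)
    (hK : ∀ (w : E →ᵇ ℝ) (x x' : E) (a : U),
      (∫ y, Real.exp (w y) ∂(P x a)) ≤ K * ∫ y, Real.exp (w y) ∂(P x' a)) :
    ∀ (x x' : E) (a : U),
      (P x a) ≪ (P x' a) ∧
      (∀ B : Set E, MeasurableSet B →
        ((P x a) B).toReal ≤ K * ((P x' a) B).toReal) ∧
      (∀ B : Set E, MeasurableSet B →
        (1 / K) * ((P x' a) B).toReal ≤ ((P x a) B).toReal) := by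
  intro x x' a
  haveI := hP x a
  haveI := hP x' a
  have hK1 : 1 ≤ K := by
    have := hK 0 x x a
    simpa using this
  have hKpos : 0 < K := lt_of_lt_of_le one_pos hK1
  letI := TopologicalSpace.upgradeIsCompletelyMetrizable E
  have h1 := B1_key (P x a) (P x' a) K hK1 (fun w => hK w x x' a)
  have h2 := B1_key (P x' a) (P x a) K hK1 (fun w => hK w x' x a)
  have hle : ∀ B : Set E, MeasurableSet B →
      ((P x a) B).toReal ≤ K * ((P x' a) B).toReal := by
    intro B hB
    have := h1 B hB
    have h' := ENNReal.toReal_mono (by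
      exact ENNReal.mul_ne_top ENNReal.ofReal_ne_top (measure_ne_top _ B)) this
    rwa [ENNReal.toReal_mul, ENNReal.toReal_ofReal hKpos.le] at h'
  have hge : ∀ B : Set E, MeasurableSet B →
      ((P x' a) B).toReal ≤ K * ((P x a) B).toReal := by
    intro B hB
    have := h2 B hB
    have h' := ENNReal.toReal_mono (by
      exact ENNReal.mul_ne_top ENNReal.ofReal_ne_top (measure_ne_top _ B)) this
    rwa [ENNReal.toReal_mul, ENNReal.toReal_ofReal hKpos.le] at h'
  refine ⟨Measure.AbsolutelyContinuous.mk fun s hs hs0 => ?_, hle, fun B hB => ?_⟩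
  · have := h1 s hs
    rw [hs0, mul_zero] at this
    exact le_antisymm this (zero_le)
  · have := hge B hB
    rw [one_div, inv_mul_le_iff₀ hKpos]
    linarith
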